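/- Let x_1,...,x_n be distinct complex numbers with n ≥ 2, and let z ∈ ℂ. Then the sum over i = 1,...,n of e^{x_i z} / ∏_{j ≠ i} (x_i - x_j) equals the convergent series ∑_{p=0}^∞ h_p(x_1,...,x_n) z^{p+n-1} / (p+n-1)!, where h_p is the complete homogeneous symmetric polynomial of degree p. -/

import Mathlib

open Finset

/-- Complete homogeneous symmetric polynomial of degree `k` (an integer, with
`hpoly n k x = 0` for `k < 0`) evaluated at `x : Fin n → F`. -/
def hpoly {F : Type*} [CommRing F] (n : ℕ) (k : ℤ) (x : Fin n → F) : F :=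
  if 0 ≤ k then ∑ lam ∈ Finset.Nat.antidiagonalTuple n k.toNat, ∏ i, x i ^ lam i else 0

/-- Elementary symmetric polynomial of degree `k` evaluated at `x : Fin n → F`. -/
def epoly {F : Type*} [CommRing F] (n k : ℕ) (x : Fin n → F) : F :=
  ∑ s ∈ (Finset.univ : Finset (Fin n)).powersetCard k, ∏ i ∈ s, x i

/-- The weighted power sum `S_d(x_1,…,x_n)`. -/
def Sfun {F : Type*} [Field F] {n : ℕ} (x : Fin n → F) (d : ℕ) : F :=
  ∑ i, x i ^ d / ∏ j ∈ Finset.univ.erase i, (x i - x j)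

section Aux

lemma sylv_basis_eq {F : Type*} [Field F] {ι : Type*} [DecidableEq ι] (s : Finset ι) (v : ι → F)
    {i : ι} (hi : i ∈ s) :
    Lagrange.basis s v i =
      Polynomial.C (Lagrange.nodalWeight s v i) * Lagrange.nodal (s.erase i) v := by
  rw [Lagrange.basis_eq_prod_sub_inv_mul_nodal_div hi, Lagrange.nodal_erase_eq_nodal_div hi]

lemma sylv_coeff_interp {F : Type*} [Field F] {ι : Type*} [DecidableEq ι] (s : Finset ι)
    (v : ι → F) (r : ι → F) :
    (Lagrange.interpolate s v r).coeff (#s - 1) =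
      ∑ i ∈ s, Lagrange.nodalWeight s v i * r i := by
  rw [Lagrange.interpolate_apply, Polynomial.finset_sum_coeff]
  refine Finset.sum_congr rfl fun i hi => ?_
  rw [sylv_basis_eq s v hi, ← mul_assoc, ← Polynomial.C_mul, Polynomial.coeff_C_mul]
  have h1 : (Lagrange.nodal (s.erase i) v).natDegree = #s - 1 := by
    rw [Lagrange.natDegree_nodal, card_erase_of_mem hi]
  rw [← h1, Lagrange.nodal_monic.coeff_natDegree, mul_one, mul_comm]

lemma sylv_eval_interp {F : Type*} [Field F] {ι : Type*} [DecidableEq ι] (s : Finset ι)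
    (v : ι → F) (r : ι → F) (u : F) :
    (Lagrange.interpolate s v r).eval u =
      ∑ i ∈ s, r i * (Lagrange.nodalWeight s v i * ∏ j ∈ s.erase i, (u - v j)) := by
  rw [Lagrange.interpolate_apply, Polynomial.eval_finset_sum]
  refine Finset.sum_congr rfl fun i hi => ?_
  rw [sylv_basis_eq s v hi, Polynomial.eval_mul, Polynomial.eval_mul, Polynomial.eval_C,
    Polynomial.eval_C, Lagrange.eval_nodal]

lemma sylv_L1 {n : ℕ} (hn : 1 ≤ n) (x : Fin n → ℂ) (hx : Function.Injective x) {d : ℕ}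
    (hd : d < n) :
    ∑ i, Lagrange.nodalWeight univ x i * x i ^ d = if d = n - 1 then 1 else 0 := by
  have hcard : #(univ : Finset (Fin n)) = n := by simp
  have hdeg : (Polynomial.X ^ d : Polynomial ℂ).degree < (#(univ : Finset (Fin n)) : ℕ) := by
    rw [hcard, Polynomial.degree_X_pow]; exact_mod_cast hd
  have h := Lagrange.eq_interpolate (f := (Polynomial.X ^ d : Polynomial ℂ)) (hx.injOn) hdeg
  have h2 := congrArg (fun p => Polynomial.coeff p (n - 1)) h
  simp only [Polynomial.coeff_X_pow] at h2
  rw [show n - 1 = #(univ : Finset (Fin n)) - 1 by rw [hcard]] at h2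
  rw [sylv_coeff_interp] at h2
  simp only [Polynomial.eval_pow, Polynomial.eval_X] at h2
  rw [← h2, hcard]
  by_cases hdn : d = n - 1 <;> simp [hdn, eq_comm]

lemma sylv_L2 {n : ℕ} (hn : 1 ≤ n) (x : Fin n → ℂ) (hx : Function.Injective x) (u : ℂ) :
    ∑ i, x i ^ (n - 1) * (Lagrange.nodalWeight univ x i * ∏ j ∈ univ.erase i, (u - x j))
      = u ^ (n - 1) := by
  have hcard : #(univ : Finset (Fin n)) = n := by simp
  have hdeg : (Polynomial.X ^ (n - 1) : Polynomial ℂ).degree < (#(univ : Finset (Fin n)) : ℕ) := by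
    rw [hcard, Polynomial.degree_X_pow]; exact_mod_cast Nat.sub_lt hn one_pos
  have h := Lagrange.eq_interpolate (f := (Polynomial.X ^ (n - 1) : Polynomial ℂ)) (hx.injOn) hdeg
  have h2 := congrArg (Polynomial.eval u) h
  rw [sylv_eval_interp] at h2
  simp only [Polynomial.eval_pow, Polynomial.eval_X] at h2
  exact h2.symm

lemma sylv_Qone {n : ℕ} (hn : 1 ≤ n) (x : Fin n → ℂ) (hx : Function.Injective x) :
    ∑ i, Polynomial.C (x i ^ (n - 1) * Lagrange.nodalWeight univ x i) *
        ∏ j ∈ univ.erase i, (1 - Polynomial.C (x j) * Polynomial.X) = (1 : Polynomial ℂ) := by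
  apply Polynomial.funext
  intro t
  simp only [Polynomial.eval_finset_sum, Polynomial.eval_mul, Polynomial.eval_C,
    Polynomial.eval_prod, Polynomial.eval_sub, Polynomial.eval_one, Polynomial.eval_X,
    Polynomial.eval_pow]
  rcases eq_or_ne t 0 with rfl | ht
  · simp only [mul_zero, sub_zero, prod_const_one, mul_one]
    have h := sylv_L1 hn x hx (Nat.sub_lt hn one_pos)
    rw [if_pos rfl] at h
    rw [← h]
    exact Finset.sum_congr rfl fun i _ => by ring
  · have hcard : ∀ i : Fin n, #(univ.erase i) = n - 1 := fun i => by
      rw [card_erase_of_mem (mem_univ i), card_univ, Fintype.card_fin]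
    have key : ∀ i : Fin n, ∏ j ∈ univ.erase i, (1 - x j * t)
        = t ^ (n - 1) * ∏ j ∈ univ.erase i, (t⁻¹ - x j) := by
      intro i
      rw [← hcard i, ← Finset.prod_const t, ← Finset.prod_mul_distrib]
      refine Finset.prod_congr rfl fun j _ => ?_
      field_simp
    calc ∑ i, x i ^ (n - 1) * Lagrange.nodalWeight univ x i * ∏ j ∈ univ.erase i, (1 - x j * t)
        = t ^ (n - 1) * ∑ i, x i ^ (n - 1) *
            (Lagrange.nodalWeight univ x i * ∏ j ∈ univ.erase i, (t⁻¹ - x j)) := by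
          rw [Finset.mul_sum]
          exact Finset.sum_congr rfl fun i _ => by rw [key i]; ring
      _ = t ^ (n - 1) * (t⁻¹) ^ (n - 1) := by rw [sylv_L2 hn x hx]
      _ = 1 := by rw [← mul_pow, mul_inv_cancel₀ ht, one_pow]

lemma sylv_geom (a : ℂ) :
    (1 - PowerSeries.C a * PowerSeries.X) * PowerSeries.mk (fun p => a ^ p) = 1 := by
  ext k
  rw [sub_mul, one_mul, map_sub, mul_assoc, PowerSeries.coeff_C_mul]
  cases k with
  | zero => simp
  | succ k => simp [PowerSeries.coeff_succ_X_mul, pow_succ, mul_comm]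

lemma sylv_key {n : ℕ} (hn : 1 ≤ n) (x : Fin n → ℂ) (hx : Function.Injective x) (p : ℕ) :
    ∑ i, x i ^ (p + (n - 1)) * Lagrange.nodalWeight univ x i = hpoly n (p : ℤ) x := by
  set P : PowerSeries ℂ := ∏ i, (1 - PowerSeries.C (x i) * PowerSeries.X) with hP
  set G : PowerSeries ℂ := ∏ i, PowerSeries.mk (fun p => x i ^ p) with hG
  set R : PowerSeries ℂ := ∑ i, PowerSeries.C (x i ^ (n - 1) * Lagrange.nodalWeight univ x i) *
      PowerSeries.mk (fun p => x i ^ p) with hR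
  have hPG : P * G = 1 := by
    rw [hP, hG, ← Finset.prod_mul_distrib]
    exact Finset.prod_eq_one fun i _ => sylv_geom (x i)
  have hPR : P * R = 1 := by
    have h2 := congrArg (Polynomial.coeToPowerSeries.ringHom (R := ℂ)) (sylv_Qone hn x hx)
    simp only [map_sum, map_mul, map_prod, map_sub, map_one,
      Polynomial.coeToPowerSeries.ringHom_apply, Polynomial.coe_C, Polynomial.coe_X] at h2
    rw [hR, Finset.mul_sum, ← h2]
    refine Finset.sum_congr rfl fun i _ => ?_
    rw [map_mul, hP, ← Finset.mul_prod_erase _ _ (mem_univ i)]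
    have hgi := sylv_geom (x i)
    linear_combination (PowerSeries.C (x i ^ (n - 1)) *
      PowerSeries.C (Lagrange.nodalWeight univ x i) *
      ∏ j ∈ univ.erase i, (1 - PowerSeries.C (x j) * PowerSeries.X)) * hgi
  have hPne : P ≠ 0 := left_ne_zero_of_mul_eq_one hPG
  have hGR : G = R := mul_left_cancel₀ hPne (hPG.trans hPR.symm)
  have hcoeffR : (PowerSeries.coeff p) R = ∑ i, x i ^ (p + (n - 1)) *
      Lagrange.nodalWeight univ x i := by
    rw [hR, map_sum]
    refine Finset.sum_congr rfl fun i _ => ?_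
    rw [PowerSeries.coeff_C_mul, PowerSeries.coeff_mk, pow_add]
    ring
  have hcoeffG : (PowerSeries.coeff p) G = hpoly n (p : ℤ) x := by
    rw [hG, PowerSeries.coeff_prod]
    rw [hpoly, if_pos (Int.natCast_nonneg p), Int.toNat_natCast]
    refine Finset.sum_nbij' (fun l => (l : Fin n → ℕ))
      (fun f => Finsupp.equivFunOnFinite.symm f) ?_ ?_ ?_ ?_ ?_
    · intro l hl
      rw [Finset.mem_finsuppAntidiag] at hl
      rw [Finset.Nat.mem_antidiagonalTuple]
      exact hl.1
    · intro f hf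
      rw [Finset.Nat.mem_antidiagonalTuple] at hf
      rw [Finset.mem_finsuppAntidiag]
      refine ⟨?_, subset_univ _⟩
      simpa using hf
    · intro l _; exact Finsupp.equivFunOnFinite.symm_apply_apply l
    · intro f _; exact Finsupp.equivFunOnFinite.apply_symm_apply f
    · intro l _
      simp [PowerSeries.coeff_mk]
  rw [← hcoeffR, ← hcoeffG, hGR]

end Aux

/-- The exponential generating function form of Sylvester's identity. -/
theorem sylvester_exp (n : ℕ) (hn : 2 ≤ n) (x : Fin n → ℂ)
    (hx : Function.Injective x) (z : ℂ) :
    ∑ i, Complex.exp (x i * z) / ∏ j ∈ Finset.univ.erase i, (x i - x j)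
      = ∑' p : ℕ, hpoly n (p : ℤ) x * z ^ (p + n - 1) / ((p + n - 1).factorial : ℂ) := by
  have hn1 : 1 ≤ n := le_trans one_le_two hn
  set w : Fin n → ℂ := fun i => Lagrange.nodalWeight univ x i with hwdef
  have hw : ∀ i, (∏ j ∈ univ.erase i, (x i - x j))⁻¹ = w i := fun i => by
    simp only [hwdef, Lagrange.nodalWeight, ← Finset.prod_inv_distrib]
  set g : Fin n → ℕ → ℂ := fun i d => w i * ((x i * z) ^ d / (d.factorial : ℂ)) with hgdef
  have hsum : ∀ i, Summable (g i) := fun i =>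
    (NormedSpace.expSeries_div_summable (x i * z)).mul_left (w i)
  set F : ℕ → ℂ := fun d => (∑ i, x i ^ d * w i) * z ^ d / (d.factorial : ℂ) with hFdef
  have hFg : ∀ d, ∑ i, g i d = F d := by
    intro d
    rw [hFdef, hgdef]
    simp only
    rw [Finset.sum_mul, Finset.sum_div]
    refine Finset.sum_congr rfl fun i _ => ?_
    rw [mul_pow]
    ring
  have hFsum : Summable F := by
    have : Summable (fun d => ∑ i, g i d) := summable_sum fun i _ => hsum i
    exact this.congr hFg
  have hLHS : ∑ i, Complex.exp (x i * z) / ∏ j ∈ univ.erase i, (x i - x j)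
      = ∑' d : ℕ, F d := by
    have h1 : ∀ i : Fin n, Complex.exp (x i * z) / ∏ j ∈ univ.erase i, (x i - x j)
        = ∑' d : ℕ, g i d := by
      intro i
      rw [div_eq_mul_inv, hw, Complex.exp_eq_exp_ℂ, NormedSpace.exp_eq_tsum_div, mul_comm,
        ← tsum_mul_left]
    calc ∑ i, Complex.exp (x i * z) / ∏ j ∈ univ.erase i, (x i - x j)
        = ∑ i, ∑' d : ℕ, g i d := Finset.sum_congr rfl fun i _ => h1 i
      _ = ∑' d : ℕ, ∑ i, g i d := (Summable.tsum_finsetSum fun i _ => hsum i).symm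
      _ = ∑' d : ℕ, F d := tsum_congr hFg
  rw [hLHS, ← Summable.sum_add_tsum_nat_add (n - 1) hFsum]
  have hzero : ∑ d ∈ range (n - 1), F d = 0 := by
    refine Finset.sum_eq_zero fun d hd => ?_
    rw [mem_range] at hd
    have h := sylv_L1 hn1 x hx (lt_of_lt_of_le hd (Nat.sub_le n 1))
    rw [if_neg (Nat.ne_of_lt hd)] at h
    have h2 : ∑ i, x i ^ d * w i = 0 := by
      rw [← h]; exact Finset.sum_congr rfl fun i _ => mul_comm _ _
    rw [hFdef]
    simp only
    rw [h2, zero_mul, zero_div]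
  rw [hzero, zero_add]
  refine tsum_congr fun p => ?_
  have hidx : p + (n - 1) = p + n - 1 := by omega
  rw [hFdef]
  simp only
  rw [sylv_key hn1 x hx p, hidx]
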